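/- Let F be a field of characteristic zero and C an F-linear, idempotent complete, symmetric monoidal category. Schur-finiteness is stable under direct factors: if Y is a direct summand (retract) of an object X, and c(X^{⊗n}) = 0 for some n ≥ 1 and some nonzero idempotent c ∈ F[S_n], then also c(Y^{⊗n}) = 0; in particular, every direct summand of a Schur-finite object is Schur-finite. (Claim used in the proof of Proposition 6.1.) -/

import Mathlib

/-!
Schur-finiteness in an `F`-linear idempotent complete symmetric monoidal category,
and its preservation by `F`-linear symmetric monoidal functors.
-/

open CategoryTheory MonoidalCategory

namespace SchurFiniteness

variable {C : Type*} [Category C] [MonoidalCategory C] [BraidedCategory C]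

/-- The `n`-th tensor power of an object, right-nested:
`tpow X n = X ⊗ (X ⊗ (⋯ ⊗ 𝟙_ C))`.  Factor `0` is the leftmost one. -/
def tpow (X : C) : ℕ → C
  | 0 => 𝟙_ C
  | n + 1 => X ⊗ tpow X n

/-- The braiding of the two leftmost factors of `tpow X (n+2)`,
i.e. the action of the transposition `(0 1)`. -/
def swapFront (X : C) (n : ℕ) : tpow X (n + 2) ⟶ tpow X (n + 2) :=
  (α_ X X (tpow X n)).inv ≫ ((β_ X X).hom ▷ tpow X n) ≫ (α_ X X (tpow X n)).hom

/-- The action of the transposition `(0 p)` on `tpow X n`, defined recursively via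
`(0 (p+1)) = (0 1) ∘ (1 (p+1)) ∘ (0 1)` and the braiding. -/
def swapZero (X : C) : (n : ℕ) → Fin n → (tpow X n ⟶ tpow X n)
  | _ + 1, ⟨0, _⟩ => 𝟙 _
  | 1, ⟨_ + 1, h⟩ => absurd h (by omega)
  | n + 2, ⟨1, _⟩ => swapFront X n
  | n + 2, ⟨p + 2, h⟩ =>
      swapFront X n ≫ (X ◁ swapZero X (n + 1) ⟨p + 1, by omega⟩) ≫ swapFront X n

/-- The canonical (left) action of the symmetric group `S_n` on the `n`-th tensor power
`tpow X n`, by permutation of the factors via the symmetry isomorphisms: the factor in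
position `i` is moved to position `σ i`.  It is defined by recursion, using the
decomposition `σ = (0 (σ 0)) ∘ σ'` with `σ'` fixing `0` given by `Equiv.Perm.decomposeFin`. -/
def permAction (X : C) : (n : ℕ) → Equiv.Perm (Fin n) → (tpow X n ⟶ tpow X n)
  | 0, _ => 𝟙 _
  | n + 1, σ =>
      (X ◁ permAction X n (Equiv.Perm.decomposeFin σ).2) ≫
        swapZero X (n + 1) (Equiv.Perm.decomposeFin σ).1

variable (F : Type*) [Field F] [Preadditive C] [CategoryTheory.Linear F C]

/-- The endomorphism of `tpow X n` induced by an element `c` of the group algebra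
`F[S_n]`, i.e. the value at `c` of the `F`-linear extension of the permutation action. -/
noncomputable def schurMap (X : C) (n : ℕ)
    (c : MonoidAlgebra F (Equiv.Perm (Fin n))) : tpow X n ⟶ tpow X n :=
  Finsupp.sum c.coeff fun σ a => a • permAction X n σ

/-- An object `X` is Schur-finite if there are an integer `n ≥ 1` and a nonzero
idempotent `c ∈ F[S_n]` such that the induced idempotent endomorphism of `X^{⊗ n}`
is zero (equivalently, its image `c(X^{⊗n})` vanishes). -/
def SchurFinite (X : C) : Prop :=
  ∃ n : ℕ, 1 ≤ n ∧ ∃ c : MonoidAlgebra F (Equiv.Perm (Fin n)),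
    c ≠ 0 ∧ IsIdempotentElem c ∧ schurMap F X n c = 0

end SchurFiniteness

namespace SchurFiniteness

section Aux

set_option linter.unusedSectionVars false

variable {C : Type*} [Category C] [MonoidalCategory C] [BraidedCategory C]

/-- Tensor power of a morphism. -/
def tpowHom {X Y : C} (f : X ⟶ Y) : (n : ℕ) → (tpow X n ⟶ tpow Y n)
  | 0 => 𝟙 _
  | n + 1 => f ⊗ₘ tpowHom f n

lemma tpowHom_comp {X Y Z : C} (f : X ⟶ Y) (g : Y ⟶ Z) (n : ℕ) :
    tpowHom f n ≫ tpowHom g n = tpowHom (f ≫ g) n := by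
  induction n with
  | zero => simp [tpowHom]; exact Category.comp_id _
  | succ n ih => simp [tpowHom, tensorHom_comp_tensorHom, ih]; exact (tensorHom_comp_tensorHom _ _ _ _).trans (by rw [ih])

lemma tpowHom_id (X : C) (n : ℕ) : tpowHom (𝟙 X) n = 𝟙 (tpow X n) := by
  induction n with
  | zero => rfl
  | succ n ih =>
    show 𝟙 X ⊗ₘ tpowHom (𝟙 X) n = 𝟙 (X ⊗ tpow X n)
    rw [ih, id_tensorHom_id]

lemma tensor_whiskerLeft_swap {X Y A B : C} (f : X ⟶ Y) (u : A ⟶ B)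
    (w : B ⟶ B) (w' : A ⟶ A) (h : u ≫ w = w' ≫ u) :
    (f ⊗ₘ u) ≫ (Y ◁ w) = (X ◁ w') ≫ (f ⊗ₘ u) := by
  rw [← id_tensorHom, ← id_tensorHom, tensorHom_comp_tensorHom, tensorHom_comp_tensorHom,
    Category.comp_id, Category.id_comp, h]

lemma swapFront_natural {X Y : C} (f : X ⟶ Y) (n : ℕ) :
    tpowHom f (n + 2) ≫ swapFront Y n = swapFront X n ≫ tpowHom f (n + 2) := by
  show (f ⊗ₘ (f ⊗ₘ tpowHom f n)) ≫ _ = _ ≫ (f ⊗ₘ (f ⊗ₘ tpowHom f n))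
  simp only [swapFront, ← tensorHom_id]
  erw [associator_inv_naturality_assoc, tensorHom_comp_tensorHom_assoc,
    BraidedCategory.braiding_naturality, Category.comp_id,
    ← Category.id_comp (tpowHom f n), ← tensorHom_comp_tensorHom_assoc, associator_naturality,
    Category.id_comp]
  exact ((Category.assoc (α_ X X (tpow X n)).inv (((β_ X X).hom ⊗ₘ 𝟙 (tpow X n)) ≫ (α_ X X (tpow X n)).hom)
    (f ⊗ₘ f ⊗ₘ tpowHom f n)).trans (whisker_eq (α_ X X (tpow X n)).inv (Category.assoc
    ((β_ X X).hom ⊗ₘ 𝟙 (tpow X n)) (α_ X X (tpow X n)).hom (f ⊗ₘ f ⊗ₘ tpowHom f n)))).symm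

lemma swapZero_natural {X Y : C} (f : X ⟶ Y) :
    ∀ (n : ℕ) (k : Fin n),
      tpowHom f n ≫ swapZero Y n k = swapZero X n k ≫ tpowHom f n := by
  intro n
  induction n with
  | zero => exact fun k => k.elim0
  | succ n ih =>
    rintro ⟨k, hk⟩
    match n, k, hk, ih with
    | n, 0, _, _ =>
      simp only [swapZero, Category.comp_id, Category.id_comp]
    | n + 1, 1, _, _ => exact swapFront_natural f n
    | n + 1, p + 2, hk, ih =>
      show tpowHom f (n + 2) ≫ (swapFront Y n ≫ _ ≫ swapFront Y n)
          = (swapFront X n ≫ _ ≫ swapFront X n) ≫ tpowHom f (n + 2)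
      have h2 : tpowHom f (n + 2) ≫ (Y ◁ swapZero Y (n + 1) ⟨p + 1, by omega⟩)
          = (X ◁ swapZero X (n + 1) ⟨p + 1, by omega⟩) ≫ tpowHom f (n + 2) :=
        tensor_whiskerLeft_swap f _ _ _ (ih ⟨p + 1, by omega⟩)
      exact (Category.assoc _ _ _).symm.trans ((eq_whisker (swapFront_natural f n) _).trans ((Category.assoc _ _ _).trans
        ((whisker_eq _ (Category.assoc _ _ _).symm).trans ((whisker_eq _ (eq_whisker h2 _)).trans ((whisker_eq _ (Category.assoc _ _ _)).trans
        ((whisker_eq _ (whisker_eq _ (swapFront_natural f n))).trans ((whisker_eq _ (Category.assoc _ _ _).symm).trans (Category.assoc _ _ _).symm)))))))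

lemma permAction_natural {X Y : C} (f : X ⟶ Y) :
    ∀ (n : ℕ) (σ : Equiv.Perm (Fin n)),
      tpowHom f n ≫ permAction Y n σ = permAction X n σ ≫ tpowHom f n := by
  intro n
  induction n with
  | zero => intro σ; show 𝟙 _ ≫ 𝟙 _ = 𝟙 _ ≫ 𝟙 _; rfl
  | succ n ih =>
    intro σ
    show tpowHom f (n + 1) ≫ (_ ≫ _) = (_ ≫ _) ≫ tpowHom f (n + 1)
    have h2 : tpowHom f (n + 1) ≫ (Y ◁ permAction Y n (Equiv.Perm.decomposeFin σ).2)
        = (X ◁ permAction X n (Equiv.Perm.decomposeFin σ).2) ≫ tpowHom f (n + 1) :=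
      tensor_whiskerLeft_swap f _ _ _ (ih _)
    exact (Category.assoc _ _ _).symm.trans ((eq_whisker h2 _).trans ((Category.assoc _ _ _).trans
      ((whisker_eq _ (swapZero_natural f (n + 1) (Equiv.Perm.decomposeFin σ).1)).trans (Category.assoc _ _ _).symm)))

variable (F : Type*) [Field F] [Preadditive C] [CategoryTheory.Linear F C]

lemma schurMap_natural {X Y : C} (f : X ⟶ Y) (n : ℕ)
    (c : MonoidAlgebra F (Equiv.Perm (Fin n))) :
    tpowHom f n ≫ schurMap F Y n c = schurMap F X n c ≫ tpowHom f n := by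
  simp only [schurMap, Finsupp.sum, Preadditive.comp_sum, Preadditive.sum_comp,
    Linear.comp_smul, Linear.smul_comp]
  exact Finset.sum_congr rfl fun σ _ => by rw [permAction_natural]

end Aux

end SchurFiniteness

open SchurFiniteness

/-- In an `F`-linear (`F` of characteristic zero), idempotent complete,
symmetric monoidal category, Schur-finiteness is stable under direct factors: if `Y` is a
retract of `X` (there are `i : Y ⟶ X`, `p : X ⟶ Y` with `i ≫ p = 𝟙 Y`), then for every
`n ≥ 1` and every nonzero idempotent `c ∈ F[S_n]` with `c(X^{⊗n}) = 0` we also have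
`c(Y^{⊗n}) = 0`; in particular every direct summand of a Schur-finite object is
Schur-finite. -/
theorem schurFinite_of_retract
    (F : Type*) [Field F] [CharZero F]
    {C : Type*} [Category C] [Preadditive C] [CategoryTheory.Linear F C]
    [MonoidalCategory C] [SymmetricCategory C] [IsIdempotentComplete C]
    (X Y : C) (i : Y ⟶ X) (p : X ⟶ Y) (hip : i ≫ p = 𝟙 Y) :
    (∀ (n : ℕ), 1 ≤ n → ∀ c : MonoidAlgebra F (Equiv.Perm (Fin n)),
      c ≠ 0 → IsIdempotentElem c → schurMap F X n c = 0 → schurMap F Y n c = 0) ∧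
    (SchurFinite F X → SchurFinite F Y) := by
  have key : ∀ (n : ℕ), ∀ c : MonoidAlgebra F (Equiv.Perm (Fin n)),
      schurMap F X n c = 0 → schurMap F Y n c = 0 := by
    intro n c h
    calc schurMap F Y n c = 𝟙 (tpow Y n) ≫ schurMap F Y n c := by rw [Category.id_comp]
      _ = (tpowHom i n ≫ tpowHom p n) ≫ schurMap F Y n c := by
          rw [tpowHom_comp, hip, tpowHom_id]
      _ = tpowHom i n ≫ schurMap F X n c ≫ tpowHom p n := by
          rw [Category.assoc, schurMap_natural]
      _ = 0 := by rw [h, Limits.zero_comp, Limits.comp_zero]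
  refine ⟨fun n _ c _ _ h => key n c h, ?_⟩
  rintro ⟨n, hn, c, hc, hidem, h⟩
  exact ⟨n, hn, c, hc, hidem, key n c h⟩
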